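/- Let $q_1 \equiv q_2 \equiv 3 \pmod 4$ be distinct primes with $q_1 q_2 \equiv 1 \pmod 8$, and let $u_1 = x + y\sqrt{q_1 q_2}$ (with $x, y$ positive integers) be the fundamental unit of $\mathbb{Q}(\sqrt{q_1 q_2})$. Then $N(u_1) = 1$ and $\frac{x+1}{2}$ equals $q_1 m^2$ or $q_2 m^2$ for some positive integer $m$ dividing $y/2$. In particular, the squarefree part of $N(u_1 + 1) = 2(x+1)$ is $q_1$ or $q_2$. -/

import Mathlib

private lemma no_neg_sol (q : ℕ) (hq : q.Prime) (h3 : q % 4 = 3) (D n m : ℤ)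
    (hD : (q : ℤ) ∣ D) : n ^ 2 - D * m ^ 2 ≠ -1 := by
  intro h
  haveI : Fact q.Prime := ⟨hq⟩
  obtain ⟨c, hc⟩ := hD
  rw [hc] at h
  have h' : ((n : ZMod q)) ^ 2 = -1 := by
    have := congrArg (fun z : ℤ => (z : ZMod q)) h
    push_cast at this
    simpa [ZMod.natCast_self] using this
  have hsq : IsSquare (-1 : ZMod q) := ⟨(n : ZMod q), by rw [← h']; ring⟩
  exact (ZMod.exists_sq_eq_neg_one_iff.mp hsq) h3

private lemma aux_dec (p r A B b : ℤ) (hp : 0 < p) (hr : 0 < r) (hA : 0 < A) (hB : 0 < B)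
    (hb : 0 < b) (hcop : IsCoprime A B) (hAB : A * B = p * r * b ^ 2)
    (hpA : p ∣ A) (hrB : r ∣ B) :
    ∃ m n : ℤ, 0 < m ∧ 0 < n ∧ m ∣ b ∧ n ∣ b ∧ A = p * m ^ 2 ∧ B = r * n ^ 2 := by
  obtain ⟨c, hc⟩ := hpA
  obtain ⟨d, hd⟩ := hrB
  have hc0 : 0 < c := by
    by_contra hcon
    push_neg at hcon
    nlinarith [hA.trans_eq hc]
  have hd0 : 0 < d := by
    by_contra hcon
    push_neg at hcon
    nlinarith [hB.trans_eq hd]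
  have hcd : c * d = b ^ 2 := by
    have h2 : p * (r * (c * d)) = p * (r * b ^ 2) := by
      rw [hc, hd] at hAB; linear_combination hAB
    exact mul_left_cancel₀ hr.ne' (mul_left_cancel₀ hp.ne' h2)
  have hccop : IsCoprime c d :=
    (hcop.of_isCoprime_of_dvd_left (by rw [hc]; exact dvd_mul_left c p)).of_isCoprime_of_dvd_right
      (by rw [hd]; exact dvd_mul_left d r)
  obtain ⟨m, hm⟩ := Int.sq_of_isCoprime hccop hcd
  obtain ⟨n, hn⟩ := Int.sq_of_isCoprime hccop.symm (by rw [mul_comm]; exact hcd)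
  have hcm : c = m ^ 2 := by
    rcases hm with h | h
    · exact h
    · nlinarith [sq_nonneg m]
  have hdn : d = n ^ 2 := by
    rcases hn with h | h
    · exact h
    · nlinarith [sq_nonneg n]
  have hm0 : m ≠ 0 := by rintro rfl; simp [hcm] at hc0
  have hn0 : n ≠ 0 := by rintro rfl; simp [hdn] at hd0
  have hmb : m ∣ b := by
    have : m ^ 2 ∣ b ^ 2 := ⟨d, by rw [← hcd, hcm]⟩
    exact (Int.pow_dvd_pow_iff two_ne_zero).mp this
  have hnb : n ∣ b := by
    have : n ^ 2 ∣ b ^ 2 := ⟨c, by rw [← hcd, hdn]; ring⟩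
    exact (Int.pow_dvd_pow_iff two_ne_zero).mp this
  refine ⟨|m|, |n|, abs_pos.mpr hm0, abs_pos.mpr hn0, (abs_dvd _ _).mpr hmb,
    (abs_dvd _ _).mpr hnb, by rw [hc, hcm, sq_abs], by rw [hd, hdn, sq_abs]⟩

theorem stmt_4 (q1 q2 : ℕ) (hq1 : q1.Prime) (hq2 : q2.Prime) (hne : q1 ≠ q2)
    (h1 : q1 % 4 = 3) (h2 : q2 % 4 = 3) (h8 : (q1 * q2) % 8 = 1)
    (x y : ℤ) (hx : 0 < x) (hy : 0 < y)
    (hunit : x ^ 2 - (q1 : ℤ) * q2 * y ^ 2 = 1 ∨ x ^ 2 - (q1 : ℤ) * q2 * y ^ 2 = -1)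
    (hfund : ∀ a b : ℤ, 0 < a → 0 < b →
      (a ^ 2 - (q1 : ℤ) * q2 * b ^ 2 = 1 ∨ a ^ 2 - (q1 : ℤ) * q2 * b ^ 2 = -1) →
      (x : ℝ) + y * Real.sqrt (q1 * q2) ≤ (a : ℝ) + b * Real.sqrt (q1 * q2)) :
    x ^ 2 - (q1 : ℤ) * q2 * y ^ 2 = 1 ∧
      (∃ m : ℤ, 0 < m ∧ m ∣ y / 2 ∧
        ((x + 1) / 2 = (q1 : ℤ) * m ^ 2 ∨ (x + 1) / 2 = (q2 : ℤ) * m ^ 2)) ∧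
      ∃ k : ℤ, 2 * (x + 1) = (q1 : ℤ) * k ^ 2 ∨ 2 * (x + 1) = (q2 : ℤ) * k ^ 2 := by
  set D : ℤ := (q1 : ℤ) * q2 with hDdef
  have hq1' : Prime (q1 : ℤ) := Nat.prime_iff_prime_int.mp hq1
  have hq2' : Prime (q2 : ℤ) := Nat.prime_iff_prime_int.mp hq2
  have hq1pos : (2 : ℤ) ≤ (q1 : ℤ) := by exact_mod_cast hq1.two_le
  have hq2pos : (2 : ℤ) ≤ (q2 : ℤ) := by exact_mod_cast hq2.two_le
  have hDpos : (4 : ℤ) ≤ D := by nlinarith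
  -- the norm is 1
  have e : x ^ 2 - D * y ^ 2 = 1 := by
    rcases hunit with h | h
    · exact h
    · exact absurd h (no_neg_sol q1 hq1 h1 D x y ⟨q2, rfl⟩)
  -- D ≡ 1 mod 4
  have hD8 : D % 8 = 1 := by
    have : ((q1 * q2 : ℕ) : ℤ) % 8 = 1 := by
      have : (q1 * q2 : ℕ) % 8 = 1 := h8
      omega
    simpa [hDdef] using this
  obtain ⟨d, hd⟩ : ∃ d : ℤ, D = 4 * d + 1 := ⟨D / 4, by omega⟩
  -- parity: x odd, y even
  rcases Int.even_or_odd x with ⟨k, hk⟩ | ⟨k, hk⟩ <;>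
    rcases Int.even_or_odd y with ⟨l, hl⟩ | ⟨l, hl⟩
  · exfalso
    subst hk hl
    rw [hd] at e
    obtain ⟨K, hK⟩ : ∃ K : ℤ, 4 * K = 1 :=
      ⟨k ^ 2 - 4 * d * l ^ 2 - l ^ 2, by linear_combination e⟩
    omega
  · exfalso
    subst hk hl
    rw [hd] at e
    obtain ⟨K, hK⟩ : ∃ K : ℤ, 4 * K = 2 :=
      ⟨k ^ 2 - 4 * d * l ^ 2 - 4 * d * l - d - l ^ 2 - l, by linear_combination e⟩
    omega
  case inr.inr =>
    exfalso
    subst hk hl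
    rw [hd] at e
    obtain ⟨K, hK⟩ : ∃ K : ℤ, 4 * K = 1 :=
      ⟨k ^ 2 + k - 4 * d * l ^ 2 - 4 * d * l - d - l ^ 2 - l, by linear_combination e⟩
    omega
  case inr.inl =>
    -- x = 2k+1, y = 2l
    have hl0 : 0 < l := by omega
    have hk0 : 0 < k := by
      by_contra hcon
      push_neg at hcon
      have hk0' : k = 0 := by omega
      rw [hk, hk0'] at e
      nlinarith [hDpos, hl0, sq_nonneg l]
    have hab : k * (k + 1) = D * l ^ 2 := by
      have h4 : (4 : ℤ) * (k * (k + 1)) = 4 * (D * l ^ 2) := by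
        rw [hk, hl] at e; linear_combination e
      exact mul_left_cancel₀ (by norm_num) h4
    have hcopAB : IsCoprime (k + 1 : ℤ) k := ⟨1, -1, by ring⟩
    have hABeq : (k + 1) * k = D * l ^ 2 := by linear_combination hab
    have hq1dvd : (q1 : ℤ) ∣ (k + 1) * k := ⟨(q2 : ℤ) * l ^ 2, by rw [hABeq, hDdef]; try ring⟩
    have hq2dvd : (q2 : ℤ) ∣ (k + 1) * k := ⟨(q1 : ℤ) * l ^ 2, by rw [hABeq, hDdef]; try ring⟩
    have hq12cop : IsCoprime (q1 : ℤ) (q2 : ℤ) :=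
      Nat.isCoprime_iff_coprime.mpr ((Nat.coprime_primes hq1 hq2).mpr hne)
    have hx2 : (x + 1) / 2 = k + 1 := by omega
    have hy2 : y / 2 = l := by omega
    rcases (hq1'.dvd_mul.mp hq1dvd) with hA1 | hB1 <;>
      rcases (hq2'.dvd_mul.mp hq2dvd) with hA2 | hB2
    · -- q1 ∣ A, q2 ∣ A : norm -1 contradiction
      exfalso
      have hDA : D ∣ (k + 1) := hq12cop.mul_dvd hA1 hA2
      obtain ⟨m, n, hm, hn, hmb, hnb, hAeq, hBeq⟩ :=
        aux_dec D 1 (k + 1) k l (by linarith) one_pos (by linarith) hk0 hl0 hcopAB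
          (by rw [hABeq]; ring) hDA (one_dvd _)
      have hcontra : n ^ 2 - D * m ^ 2 = -1 := by linear_combination hAeq - hBeq
      exact no_neg_sol q1 hq1 h1 D n m ⟨q2, rfl⟩ hcontra
    · -- q1 ∣ A, q2 ∣ B : result with q1
      obtain ⟨m, n, hm, hn, hmb, hnb, hAeq, hBeq⟩ :=
        aux_dec (q1 : ℤ) (q2 : ℤ) (k + 1) k l (by linarith) (by linarith) (by linarith) hk0
          hl0 hcopAB (by rw [hABeq, hDdef]; try ring) hA1 hB2
      refine ⟨e, ⟨m, hm, by rw [hy2]; exact hmb, Or.inl (by rw [hx2]; exact hAeq)⟩,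
        ⟨2 * m, Or.inl ?_⟩⟩
      subst hk; linear_combination 4 * hAeq
    · -- q2 ∣ A, q1 ∣ B : result with q2
      obtain ⟨m, n, hm, hn, hmb, hnb, hAeq, hBeq⟩ :=
        aux_dec (q2 : ℤ) (q1 : ℤ) (k + 1) k l (by linarith) (by linarith) (by linarith) hk0
          hl0 hcopAB (by rw [hABeq, hDdef]; try ring) hA2 hB1
      refine ⟨e, ⟨m, hm, by rw [hy2]; exact hmb, Or.inr (by rw [hx2]; exact hAeq)⟩,
        ⟨2 * m, Or.inr ?_⟩⟩
      subst hk; linear_combination 4 * hAeq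
    · -- q1 ∣ B, q2 ∣ B : contradicts fundamentality
      exfalso
      have hDB : D ∣ k := hq12cop.mul_dvd hB1 hB2
      obtain ⟨m, n, hm, hn, hmb, hnb, hAeq, hBeq⟩ :=
        aux_dec 1 D (k + 1) k l one_pos (by linarith) (by linarith) hk0 hl0 hcopAB
          (by rw [hABeq]; ring) (one_dvd _) hDB
      have hsol : m ^ 2 - D * n ^ 2 = 1 := by linear_combination hBeq - hAeq
      have hR := hfund m n hm hn (Or.inl (by rw [hDdef] at hsol; exact hsol))
      have hmx : m ≤ x := by
        have hmm : m ≤ m ^ 2 := by nlinarith [hm]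
        have : m ^ 2 = k + 1 := by linarith [hAeq]
        omega
      have hny : n ≤ y - 1 := by
        have := Int.le_of_dvd hl0 hnb
        omega
      have hs : (1 : ℝ) ≤ Real.sqrt ((q1 : ℝ) * q2) := by
        rw [Real.one_le_sqrt]
        have : (1 : ℤ) ≤ (q1 : ℤ) * q2 := by nlinarith
        exact_mod_cast this
      have hs0 : (0 : ℝ) ≤ Real.sqrt ((q1 : ℝ) * q2) := Real.sqrt_nonneg _
      have hmx' : (m : ℝ) ≤ x := by exact_mod_cast hmx
      have hny' : (n : ℝ) ≤ (y : ℝ) - 1 := by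
        have : ((n : ℤ) : ℝ) ≤ ((y - 1 : ℤ) : ℝ) := by exact_mod_cast hny
        push_cast at this; linarith
      have hmul : (n : ℝ) * Real.sqrt ((q1 : ℝ) * q2) ≤
          ((y : ℝ) - 1) * Real.sqrt ((q1 : ℝ) * q2) :=
        mul_le_mul_of_nonneg_right hny' hs0
      linarith [hR, hmx', hmul, hs]
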